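/- If f is a budget-balanced distribution rule for a welfare function W (with W(∅) = 0) on a finite player set N that guarantees the existence of a pure Nash equilibrium in all games in G(N, f, W), then for every S ⊆ N and every i ∈ S, f(i, S) = f(i, N^W(S)). -/

import Mathlib

open scoped BigOperators Classical

namespace CostSharing

/-- A welfare sharing game on player set `N`: a finite resource set, a nonempty
finite action set (a collection of subsets of resources) for each player, and a
local welfare function at each resource. -/
structure Game (N : Type) [Fintype N] [DecidableEq N] where
  R : Type
  [finR : Fintype R]
  [decR : DecidableEq R]
  act : N → Finset (Finset R)
  act_nonempty : ∀ i, (act i).Nonempty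
  Wr : R → Finset N → ℝ

attribute [instance] Game.finR Game.decR

variable {N : Type} [Fintype N] [DecidableEq N]

/-- `{a}_r`: the set of players choosing resource `r` in profile `a`. -/
def playersAt {G : Game N} (a : N → Finset G.R) (r : G.R) : Finset N :=
  Finset.univ.filter fun i => r ∈ a i

/-- Player `i`'s utility, where `fD` assigns to each local welfare function its
local distribution rule (so resources with identical welfare functions have
identical distribution rules). -/
noncomputable def utility (G : Game N) (fD : (Finset N → ℝ) → N → Finset N → ℝ)
    (a : N → Finset G.R) (i : N) : ℝ :=
  ∑ r ∈ a i, fD (G.Wr r) i (playersAt a r)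

/-- Pure Nash equilibrium. -/
def IsPNE (G : Game N) (fD : (Finset N → ℝ) → N → Finset N → ℝ)
    (a : N → Finset G.R) : Prop :=
  (∀ i, a i ∈ G.act i) ∧
    ∀ i : N, ∀ b ∈ G.act i,
      utility G fD (Function.update a i b) i ≤ utility G fD a i

/-- Every game in the class `G(N, f^𝕎, 𝕎)` possesses a pure Nash equilibrium. -/
def GuaranteesPNE (𝕎 : Set (Finset N → ℝ))
    (fD : (Finset N → ℝ) → N → Finset N → ℝ) : Prop :=
  ∀ G : Game N, (∀ r : G.R, G.Wr r ∈ 𝕎) → ∃ a, IsPNE G fD a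

/-- Every game in the single-welfare-function class `G(N, f, W)` possesses a
pure Nash equilibrium. -/
def GuaranteesPNE1 (W : Finset N → ℝ) (f : N → Finset N → ℝ) : Prop :=
  ∀ G : Game N, (∀ r : G.R, G.Wr r = W) → ∃ a, IsPNE G (fun _ => f) a

/-- A distribution rule allocates nothing to absent players. -/
def DistRule (f : N → Finset N → ℝ) : Prop :=
  ∀ (i : N) (S : Finset N), i ∉ S → f i S = 0

/-- Budget balance: `∑_{i∈S} f(i,S) = W(S)`. -/
def BudgetBalanced (W : Finset N → ℝ) (f : N → Finset N → ℝ) : Prop :=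
  ∀ S : Finset N, ∑ i ∈ S, f i S = W S

/-- The inclusion (unanimity) welfare function `W^T`. -/
def unanimity (T S : Finset N) : ℝ := if T ⊆ S then 1 else 0

/-- The basis coefficient `q^W_T` of `W` on the unanimity basis (Möbius inversion). -/
def coeff (W : Finset N → ℝ) (T : Finset N) : ℝ :=
  ∑ R ∈ T.powerset, (-1 : ℝ) ^ (T.card - R.card) * W R

/-- The support `𝒯^W` of the basis representation of `W`. -/
noncomputable def supp (W : Finset N → ℝ) : Finset (Finset N) :=
  Finset.univ.filter fun T => coeff W T ≠ 0

/-- `𝒯^W(S)`: the contributing coalitions within `S`. -/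
noncomputable def suppIn (W : Finset N → ℝ) (S : Finset N) : Finset (Finset N) :=
  (supp W).filter (· ⊆ S)

/-- `N^W(S)`: the contributing players within `S`. -/
noncomputable def contributors (W : Finset N → ℝ) (S : Finset N) : Finset N :=
  (suppIn W S).biUnion id

/-- A weight system `ω = (λ, Σ)`: strictly positive player weights together with
an ordered partition of `N`. -/
structure WeightSystem (N : Type) [Fintype N] [DecidableEq N] where
  lam : N → ℝ
  lam_pos : ∀ i, 0 < lam i
  m : ℕ
  part : Fin m → Finset N
  part_nonempty : ∀ k, (part k).Nonempty
  part_disjoint : ∀ k l, k ≠ l → Disjoint (part k) (part l)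
  part_covers : ∀ i : N, ∃ k, i ∈ part k

/-- The index of the block of the ordered partition containing player `i`. -/
noncomputable def WeightSystem.idx (ω : WeightSystem N) (i : N) : Fin ω.m :=
  (ω.part_covers i).choose

/-- `T̄ = T ∩ S_k` where `k = min {j : S_j ∩ T ≠ ∅}`. -/
noncomputable def WeightSystem.bar (ω : WeightSystem N) (T : Finset N) : Finset N :=
  T.filter fun i => ∀ j ∈ T, ω.idx i ≤ ω.idx j

/-- The generalized weighted Shapley value basis rule `f^T_{GWSV}[ω]`. -/
noncomputable def fGWSVbasis (ω : WeightSystem N) (T : Finset N) (i : N)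
    (S : Finset N) : ℝ :=
  if i ∈ ω.bar T ∧ T ⊆ S then ω.lam i / ∑ j ∈ ω.bar T, ω.lam j else 0

/-- The generalized weighted marginal contribution basis rule `f^T_{GWMC}[ω]`. -/
noncomputable def fGWMCbasis (ω : WeightSystem N) (T : Finset N) (i : N)
    (S : Finset N) : ℝ :=
  if i ∈ ω.bar T ∧ T ⊆ S then ω.lam i else 0

/-- The generalized weighted Shapley value distribution rule `f^{W'}_{GWSV}[ω]`. -/
noncomputable def fGWSV (ω : WeightSystem N) (W' : Finset N → ℝ) (i : N)
    (S : Finset N) : ℝ :=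
  ∑ T ∈ supp W', coeff W' T * fGWSVbasis ω T i S

/-- The generalized weighted marginal contribution distribution rule
`f^{W''}_{GWMC}[ω]`. -/
noncomputable def fGWMC (ω : WeightSystem N) (W'' : Finset N → ℝ) (i : N)
    (S : Finset N) : ℝ :=
  ∑ T ∈ supp W'', coeff W'' T * fGWMCbasis ω T i S

/-- The recursively defined basis distribution rules `f^T` of a distribution
rule `f` for `W` (recursion along the min-partition of `(𝒯^W, ⊆)`). -/
noncomputable def basisRule (W : Finset N → ℝ) (f : N → Finset N → ℝ)
    (T : Finset N) (i : N) (S : Finset N) : ℝ :=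
  if T ⊆ S then
    (1 / coeff W T) *
      (f i T - ∑ T' ∈ ((suppIn W T).erase T).attach,
        coeff W T'.1 * basisRule W f T'.1 i S)
  else 0
termination_by T.card
decreasing_by
  have h := T'.2
  simp only [Finset.mem_erase, suppIn, Finset.mem_filter] at h
  exact Finset.card_lt_card (Finset.ssubset_iff_subset_ne.mpr ⟨h.2.2, h.1⟩)


/-- **Proposition (three necessary conditions combined).** A budget-balanced
distribution rule `f` for `W` that guarantees a pure Nash equilibrium in all
games in `G(N, f, W)` satisfies `f(i,S) = f(i, N^W(S))` for all `S ⊆ N`, `i ∈ S`. -/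

/- ## Auxiliary machinery for the proof -/

lemma coeff_insert (W : Finset N → ℝ) {a : N} {T : Finset N} (ha : a ∉ T) :
    coeff W (insert a T) = coeff (fun R => W (insert a R)) T - coeff W T := by
  unfold coeff
  rw [Finset.powerset_insert, Finset.sum_union, Finset.sum_image]
  · have hcard : (insert a T).card = T.card + 1 := Finset.card_insert_of_notMem ha
    have h1 : ∀ R ∈ T.powerset, (-1:ℝ) ^ ((insert a T).card - R.card) * W R
        = -((-1:ℝ) ^ (T.card - R.card) * W R) := by
      intro R hR
      have hle : R.card ≤ T.card := Finset.card_le_card (Finset.mem_powerset.1 hR)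
      rw [hcard]
      have : T.card + 1 - R.card = (T.card - R.card) + 1 := by omega
      rw [this, pow_succ]
      ring
    have h2 : ∀ R ∈ T.powerset, (-1:ℝ) ^ ((insert a T).card - (insert a R).card) * W (insert a R)
        = (-1:ℝ) ^ (T.card - R.card) * W (insert a R) := by
      intro R hR
      have haR : a ∉ R := fun h => ha (Finset.mem_powerset.1 hR h)
      rw [hcard, Finset.card_insert_of_notMem haR]
      congr 2
      omega
    rw [Finset.sum_congr rfl h1, Finset.sum_congr rfl h2, Finset.sum_neg_distrib]
    ring
  · intro R1 h1 R2 h2 he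
    have ha1 : a ∉ R1 := fun h => ha (Finset.mem_powerset.1 h1 h)
    have ha2 : a ∉ R2 := fun h => ha (Finset.mem_powerset.1 h2 h)
    rw [← Finset.erase_insert ha1, ← Finset.erase_insert ha2, he]
  · rw [Finset.disjoint_left]
    intro T' hT1 hT2
    obtain ⟨R, hR, rfl⟩ := Finset.mem_image.1 hT2
    exact ha (Finset.mem_powerset.1 hT1 (Finset.mem_insert_self a R))

lemma mob : ∀ (S : Finset N) (W : Finset N → ℝ), ∑ T ∈ S.powerset, coeff W T = W S := by
  intro S
  induction S using Finset.induction_on with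
  | empty => intro W; simp [coeff]
  | @insert a S ha IH =>
    intro W
    rw [Finset.powerset_insert, Finset.sum_union, Finset.sum_image]
    · have : ∀ T ∈ S.powerset, coeff W (insert a T)
          = coeff (fun R => W (insert a R)) T - coeff W T := by
        intro T hT
        exact coeff_insert W (fun h => ha (Finset.mem_powerset.1 hT h))
      rw [Finset.sum_congr rfl this, Finset.sum_sub_distrib, IH W, IH (fun R => W (insert a R))]
      ring
    · intro R1 h1 R2 h2 he
      have ha1 : a ∉ R1 := fun h => ha (Finset.mem_powerset.1 h1 h)
      have ha2 : a ∉ R2 := fun h => ha (Finset.mem_powerset.1 h2 h)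
      rw [← Finset.erase_insert ha1, ← Finset.erase_insert ha2, he]
    · rw [Finset.disjoint_left]
      intro T' hT1 hT2
      obtain ⟨R, hR, rfl⟩ := Finset.mem_image.1 hT2
      exact ha (Finset.mem_powerset.1 hT1 (Finset.mem_insert_self a R))


lemma W_insert_eq (W : Finset N → ℝ) {j : N} {C : Finset N} (hjC : j ∉ C)
    (h0 : ∀ T, T ⊆ insert j C → j ∈ T → coeff W T = 0) :
    W (insert j C) = W C := by
  rw [← mob (insert j C) W, ← mob C W, Finset.powerset_insert, Finset.sum_union]
  · have : ∑ T ∈ (C.powerset.image (insert j)), coeff W T = 0 := by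
      apply Finset.sum_eq_zero
      intro T hT
      obtain ⟨R, hR, rfl⟩ := Finset.mem_image.1 hT
      exact h0 _ (Finset.insert_subset_insert j (Finset.mem_powerset.1 hR))
        (Finset.mem_insert_self j R)
    rw [this, add_zero]
  · rw [Finset.disjoint_left]
    intro T hT1 hT2
    obtain ⟨R, hR, rfl⟩ := Finset.mem_image.1 hT2
    exact hjC (Finset.mem_powerset.1 hT1 (Finset.mem_insert_self j R))


lemma sum_fin_ite (M n : ℕ) (hn : n ≤ M) (v : ℝ) :
    (∑ c : Fin M, if (c : ℕ) < n then v else 0) = (n : ℝ) * v := by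
  rw [Finset.sum_ite, Finset.sum_const, Finset.sum_const_zero, add_zero]
  have hcard : (Finset.univ.filter fun c : Fin M => (c : ℕ) < n).card = n := by
    have h : ∀ m ∈ Finset.range n, m < M := fun m hm => lt_of_lt_of_le (Finset.mem_range.1 hm) hn
    have he : (Finset.univ.filter fun c : Fin M => (c : ℕ) < n) = (Finset.range n).attachFin h := by
      ext c
      simp [Finset.mem_attachFin, Finset.mem_range]
    rw [he, Finset.card_attachFin, Finset.card_range]
  rw [hcard, nsmul_eq_mul]

lemma sum_ite_irrel' {α : Type*} [Fintype α] (P : Prop) [Decidable P] (g : α → ℝ) :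
    (∑ i : α, if P then g i else 0) = if P then ∑ i : α, g i else 0 := by
  split <;> simp

abbrev MR (M : ℕ) := Fin 2 × Fin 2 × Fin 2 × Fin M

def exB (cnt : Fin 2 → Fin 2 → Fin 2 → ℕ) {M : ℕ} (r : MR M) : Prop :=
  (r.2.2.2 : ℕ) < cnt r.1 r.2.1 r.2.2.1

noncomputable def XsD (cnt : Fin 2 → Fin 2 → Fin 2 → ℕ) (M : ℕ) (σ : Fin 2) : Finset (MR M) :=
  Finset.univ.filter fun r => r.1 = σ ∧ exB cnt r

noncomputable def YsD (cnt : Fin 2 → Fin 2 → Fin 2 → ℕ) (M : ℕ) (τ : Fin 2) : Finset (MR M) :=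
  Finset.univ.filter fun r => r.2.1 = τ ∧ exB cnt r

noncomputable def FpD (L : Fin 2 → Finset N) (M : ℕ) (p : N) : Finset (MR M) :=
  Finset.univ.filter fun r => p ∈ L r.2.2.1

noncomputable def mpGame (x y : N) (L : Fin 2 → Finset N) (cnt : Fin 2 → Fin 2 → Fin 2 → ℕ)
    (M : ℕ) (W : Finset N → ℝ) : Game N where
  R := MR M
  act p := if p = x then {XsD cnt M 0, XsD cnt M 1}
           else if p = y then {YsD cnt M 0, YsD cnt M 1} else {FpD L M p}
  act_nonempty p := by split_ifs <;> simp
  Wr _ := W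

lemma utility_x_eq (x y : N) (hxy : x ≠ y) (L : Fin 2 → Finset N) (hyL : ∀ ℓ, y ∉ L ℓ)
    (cnt : Fin 2 → Fin 2 → Fin 2 → ℕ) (M : ℕ) (hM : ∀ s t ℓ, cnt s t ℓ ≤ M)
    (W : Finset N → ℝ) (f : N → Finset N → ℝ)
    (a : N → Finset (MR M)) (σ τ : Fin 2)
    (hax : a x = XsD cnt M σ) (hay : a y = YsD cnt M τ)
    (hfix : ∀ p, p ≠ x → p ≠ y → a p = FpD L M p) :
    utility (mpGame x y L cnt M W) (fun _ => f) a x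
      = ∑ t : Fin 2, ∑ ℓ : Fin 2, (cnt σ t ℓ : ℝ) *
          (if t = τ then f x (insert x (insert y (L ℓ))) else f x (insert x (L ℓ))) := by
  have hPA : ∀ r ∈ XsD cnt M σ, playersAt (G := mpGame x y L cnt M W) a r
      = if r.2.1 = τ then insert x (insert y (L r.2.2.1)) else insert x (L r.2.2.1) := by
    intro r hr
    rw [XsD, Finset.mem_filter] at hr
    obtain ⟨-, hr1, hr2⟩ := hr
    ext p
    simp only [playersAt, Finset.mem_filter]
    simp only [Finset.mem_univ, true_and]
    by_cases hp : p = x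
    · subst hp
      rw [hax]
      show r ∈ XsD cnt M σ ↔ _
      simp only [XsD, Finset.mem_filter, Finset.mem_univ, true_and]
      constructor
      · intro _
        split <;> exact Finset.mem_insert_self _ _
      · intro _
        exact ⟨hr1, hr2⟩
    · by_cases hp' : p = y
      · subst hp'
        rw [hay]
        show r ∈ YsD cnt M τ ↔ _
        simp only [YsD, Finset.mem_filter, Finset.mem_univ, true_and]
        constructor
        · rintro ⟨h1, -⟩
          rw [if_pos h1]
          exact Finset.mem_insert_of_mem (Finset.mem_insert_self _ _)
        · intro h
          split at h
          · next h1 => exact ⟨h1, hr2⟩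
          · exfalso
            rcases Finset.mem_insert.1 h with h' | h'
            · exact hxy h'.symm
            · exact hyL _ h'
      · rw [hfix p hp hp']
        show r ∈ FpD L M p ↔ _
        simp only [FpD, Finset.mem_filter, Finset.mem_univ, true_and]
        split <;> simp [Finset.mem_insert, hp, hp']
  have step1 : utility (mpGame x y L cnt M W) (fun _ => f) a x
      = ∑ r ∈ XsD cnt M σ, (if r.2.1 = τ then f x (insert x (insert y (L r.2.2.1)))
          else f x (insert x (L r.2.2.1))) := by
    unfold utility
    rw [hax]
    apply Finset.sum_congr rfl
    intro r hr
    rw [hPA r hr]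
    split <;> rfl
  rw [step1, XsD, Finset.sum_filter, Fintype.sum_prod_type]
  simp only [exB, ite_and]
  simp only [sum_ite_irrel']
  rw [Finset.sum_ite_eq' Finset.univ σ]
  simp only [Finset.mem_univ, if_pos]
  rw [Fintype.sum_prod_type]
  apply Finset.sum_congr rfl
  intro t _
  rw [Fintype.sum_prod_type]
  apply Finset.sum_congr rfl
  intro ℓ _
  dsimp only
  convert sum_fin_ite M (cnt σ t ℓ) (hM σ t ℓ) _
  congr 1


lemma utility_y_eq (x y : N) (hxy : x ≠ y) (L : Fin 2 → Finset N) (hxL : ∀ ℓ, x ∉ L ℓ)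
    (cnt : Fin 2 → Fin 2 → Fin 2 → ℕ) (M : ℕ) (hM : ∀ s t ℓ, cnt s t ℓ ≤ M)
    (W : Finset N → ℝ) (f : N → Finset N → ℝ)
    (a : N → Finset (MR M)) (σ τ : Fin 2)
    (hax : a x = XsD cnt M σ) (hay : a y = YsD cnt M τ)
    (hfix : ∀ p, p ≠ x → p ≠ y → a p = FpD L M p) :
    utility (mpGame x y L cnt M W) (fun _ => f) a y
      = ∑ s : Fin 2, ∑ ℓ : Fin 2, (cnt s τ ℓ : ℝ) *
          (if s = σ then f y (insert y (insert x (L ℓ))) else f y (insert y (L ℓ))) := by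
  have hPA : ∀ r ∈ YsD cnt M τ, playersAt (G := mpGame x y L cnt M W) a r
      = if r.1 = σ then insert y (insert x (L r.2.2.1)) else insert y (L r.2.2.1) := by
    intro r hr
    rw [YsD, Finset.mem_filter] at hr
    obtain ⟨-, hr1, hr2⟩ := hr
    ext p
    simp only [playersAt, Finset.mem_filter]
    simp only [Finset.mem_univ, true_and]
    by_cases hp : p = y
    · subst hp
      rw [hay]
      show r ∈ YsD cnt M τ ↔ _
      simp only [YsD, Finset.mem_filter, Finset.mem_univ, true_and]
      constructor
      · intro _
        split <;> exact Finset.mem_insert_self _ _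
      · intro _
        exact ⟨hr1, hr2⟩
    · by_cases hp' : p = x
      · subst hp'
        rw [hax]
        show r ∈ XsD cnt M σ ↔ _
        simp only [XsD, Finset.mem_filter, Finset.mem_univ, true_and]
        constructor
        · rintro ⟨h1, -⟩
          rw [if_pos h1]
          exact Finset.mem_insert_of_mem (Finset.mem_insert_self _ _)
        · intro h
          split at h
          · next h1 => exact ⟨h1, hr2⟩
          · exfalso
            rcases Finset.mem_insert.1 h with h' | h'
            · exact hxy h'
            · exact hxL _ h'
      · rw [hfix p hp' hp]
        show r ∈ FpD L M p ↔ _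
        simp only [FpD, Finset.mem_filter, Finset.mem_univ, true_and]
        split <;> simp [Finset.mem_insert, hp, hp']
  have step1 : utility (mpGame x y L cnt M W) (fun _ => f) a y
      = ∑ r ∈ YsD cnt M τ, (if r.1 = σ then f y (insert y (insert x (L r.2.2.1)))
          else f y (insert y (L r.2.2.1))) := by
    unfold utility
    rw [hay]
    apply Finset.sum_congr rfl
    intro r hr
    rw [hPA r hr]
    split <;> rfl
  rw [step1, YsD, Finset.sum_filter, Fintype.sum_prod_type]
  apply Finset.sum_congr rfl
  intro s _
  rw [Fintype.sum_prod_type]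
  simp only [exB, ite_and]
  simp only [sum_ite_irrel']
  rw [Finset.sum_ite_eq' Finset.univ τ]
  simp only [Finset.mem_univ, if_pos]
  rw [Fintype.sum_prod_type]
  apply Finset.sum_congr rfl
  intro ℓ _
  dsimp only
  convert sum_fin_ite M (cnt s τ ℓ) (hM s τ ℓ) _

lemma mp_lemma (W : Finset N → ℝ) (f : N → Finset N → ℝ) (hPNE : GuaranteesPNE1 W f)
    (x y : N) (hxy : x ≠ y) (L : Fin 2 → Finset N)
    (hxL : ∀ ℓ, x ∉ L ℓ) (hyL : ∀ ℓ, y ∉ L ℓ)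
    (cnt : Fin 2 → Fin 2 → Fin 2 → ℕ) :
    ∃ σ τ : Fin 2,
      (∀ σ' : Fin 2,
        (∑ t : Fin 2, ∑ ℓ : Fin 2, (cnt σ' t ℓ : ℝ) *
          (if t = τ then f x (insert x (insert y (L ℓ))) else f x (insert x (L ℓ))))
        ≤ ∑ t : Fin 2, ∑ ℓ : Fin 2, (cnt σ t ℓ : ℝ) *
          (if t = τ then f x (insert x (insert y (L ℓ))) else f x (insert x (L ℓ)))) ∧
      (∀ τ' : Fin 2,
        (∑ s : Fin 2, ∑ ℓ : Fin 2, (cnt s τ' ℓ : ℝ) *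
          (if s = σ then f y (insert y (insert x (L ℓ))) else f y (insert y (L ℓ))))
        ≤ ∑ s : Fin 2, ∑ ℓ : Fin 2, (cnt s τ ℓ : ℝ) *
          (if s = σ then f y (insert y (insert x (L ℓ))) else f y (insert y (L ℓ)))) := by
  set M := ∑ p : Fin 2 × Fin 2 × Fin 2, cnt p.1 p.2.1 p.2.2 with hM_def
  have hM : ∀ s t ℓ, cnt s t ℓ ≤ M := by
    intro s t ℓ
    exact Finset.single_le_sum (f := fun p : Fin 2 × Fin 2 × Fin 2 => cnt p.1 p.2.1 p.2.2)
      (fun _ _ => Nat.zero_le _) (Finset.mem_univ (s, t, ℓ))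
  obtain ⟨a, ha1, ha2⟩ := hPNE (mpGame x y L cnt M W) (fun _ => rfl)
  have hx : ∃ σ, a x = XsD cnt M σ := by
    have := ha1 x
    simp only [mpGame, if_pos rfl] at this
    rcases Finset.mem_insert.1 this with h | h
    · exact ⟨0, h⟩
    · exact ⟨1, Finset.mem_singleton.1 h⟩
  have hyy : ∃ τ, a y = YsD cnt M τ := by
    have := ha1 y
    simp only [mpGame, if_neg hxy.symm, if_pos rfl] at this
    rcases Finset.mem_insert.1 this with h | h
    · exact ⟨0, h⟩
    · exact ⟨1, Finset.mem_singleton.1 h⟩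
  obtain ⟨σ, haxσ⟩ := hx
  obtain ⟨τ, hayτ⟩ := hyy
  have hfix : ∀ p, p ≠ x → p ≠ y → a p = FpD L M p := by
    intro p hp hp'
    have := ha1 p
    simp only [mpGame, if_neg hp, if_neg hp'] at this
    exact Finset.mem_singleton.1 this
  refine ⟨σ, τ, ?_, ?_⟩
  · intro σ'
    have hmem : XsD cnt M σ' ∈ (mpGame x y L cnt M W).act x := by
      simp only [mpGame, if_pos rfl]
      fin_cases σ'
      · exact Finset.mem_insert_self _ _
      · exact Finset.mem_insert_of_mem (Finset.mem_singleton_self _)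
    have hdev := ha2 x (XsD cnt M σ') hmem
    have e1 : utility (mpGame x y L cnt M W) (fun _ => f) a x
        = ∑ t : Fin 2, ∑ ℓ : Fin 2, (cnt σ t ℓ : ℝ) *
          (if t = τ then f x (insert x (insert y (L ℓ))) else f x (insert x (L ℓ))) :=
      utility_x_eq x y hxy L hyL cnt M hM W f a σ τ haxσ hayτ hfix
    have e2 : utility (mpGame x y L cnt M W) (fun _ => f)
        (Function.update a x (XsD cnt M σ')) x
        = ∑ t : Fin 2, ∑ ℓ : Fin 2, (cnt σ' t ℓ : ℝ) *
          (if t = τ then f x (insert x (insert y (L ℓ))) else f x (insert x (L ℓ))) := by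
      apply utility_x_eq x y hxy L hyL cnt M hM W f _ σ' τ
      · exact Function.update_self x _ a
      · exact (Function.update_of_ne hxy.symm _ a).trans hayτ
      · intro p hp hp'
        exact (Function.update_of_ne hp _ a).trans (hfix p hp hp')
    rw [e1] at hdev
    rw [e2] at hdev
    exact hdev
  · intro τ'
    have hmem : YsD cnt M τ' ∈ (mpGame x y L cnt M W).act y := by
      simp only [mpGame, if_neg hxy.symm, if_pos rfl]
      fin_cases τ'
      · exact Finset.mem_insert_self _ _
      · exact Finset.mem_insert_of_mem (Finset.mem_singleton_self _)
    have hdev := ha2 y (YsD cnt M τ') hmem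
    have e1 : utility (mpGame x y L cnt M W) (fun _ => f) a y
        = ∑ s : Fin 2, ∑ ℓ : Fin 2, (cnt s τ ℓ : ℝ) *
          (if s = σ then f y (insert y (insert x (L ℓ))) else f y (insert y (L ℓ))) :=
      utility_y_eq x y hxy L hxL cnt M hM W f a σ τ haxσ hayτ hfix
    have e2 : utility (mpGame x y L cnt M W) (fun _ => f)
        (Function.update a y (YsD cnt M τ')) y
        = ∑ s : Fin 2, ∑ ℓ : Fin 2, (cnt s τ' ℓ : ℝ) *
          (if s = σ then f y (insert y (insert x (L ℓ))) else f y (insert y (L ℓ))) := by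
      apply utility_y_eq x y hxy L hxL cnt M hM W f _ σ τ'
      · exact (Function.update_of_ne hxy _ a).trans haxσ
      · exact Function.update_self y _ a
      · intro p hp hp'
        exact (Function.update_of_ne hp' _ a).trans (hfix p hp hp')
    rw [e1] at hdev
    rw [e2] at hdev
    exact hdev


lemma gadget (W : Finset N → ℝ) (f : N → Finset N → ℝ) (hPNE : GuaranteesPNE1 W f)
    {x y j : N} {B : Finset N}
    (hxB : x ∈ B) (hyB : y ∈ B) (hxy : x ≠ y) (hjB : j ∉ B)
    (hcx : f x (insert j (B.erase y)) = f x (B.erase y))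
    (hcy : f y (insert j (B.erase x)) = f y (B.erase x))
    (hdx : f x B < f x (insert j B))
    (hdy : f y (insert j B) < f y B) : False := by
  have hxj : x ≠ j := fun h => hjB (h ▸ hxB)
  have hyj : y ≠ j := fun h => hjB (h ▸ hyB)
  set Fx := f x B with hFx_def
  set Gx := f x (insert j B) with hGx_def
  set cx := f x (B.erase y) with hcx_def
  have hδx : (0:ℝ) < Gx - Fx := by linarith
  set m : ℤ := ⌊(2*(Fx + cx)) / (Gx - Fx)⌋ + 1 with hm_def
  set mp : ℕ := m.toNat with hmp_def
  set mm : ℕ := (-m).toNat with hmm_def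
  have hmpm : (mp:ℝ) - (mm:ℝ) = (m:ℝ) := by
    have h := Int.toNat_sub_toNat_neg m
    rw [hmp_def, hmm_def]
    exact_mod_cast congrArg (fun z : ℤ => (z:ℝ)) h
  have hm1 : 2*(Fx + cx) < (m:ℝ) * (Gx - Fx) := by
    have h := Int.lt_floor_add_one ((2*(Fx + cx)) / (Gx - Fx))
    have h2 : (2*(Fx + cx)) / (Gx - Fx) < (m:ℝ) := by
      rw [hm_def]
      push_cast
      linarith
    calc 2*(Fx + cx) = ((2*(Fx + cx)) / (Gx - Fx)) * (Gx - Fx) := by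
          field_simp
      _ < (m:ℝ) * (Gx - Fx) := mul_lt_mul_of_pos_right h2 hδx
  have hm2 : (m:ℝ) * (Gx - Fx) < 2*(Fx + cx) + 2*(Gx - Fx) := by
    have h := Int.floor_le ((2*(Fx + cx)) / (Gx - Fx))
    have h2 : ((m:ℝ) - 1) ≤ (2*(Fx + cx)) / (Gx - Fx) := by
      rw [hm_def]
      push_cast
      linarith
    have h3 : ((m:ℝ) - 1) * (Gx - Fx) ≤ 2*(Fx + cx) := by
      calc ((m:ℝ) - 1) * (Gx - Fx) ≤ ((2*(Fx + cx)) / (Gx - Fx)) * (Gx - Fx) :=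
            mul_le_mul_of_nonneg_right h2 hδx.le
        _ = 2*(Fx + cx) := by field_simp
    nlinarith
  have hexp : (m:ℝ) * (Gx - Fx)
      = (mp:ℝ)*Gx - (mp:ℝ)*Fx - (mm:ℝ)*Gx + (mm:ℝ)*Fx := by
    rw [← hmpm]; ring
  set E : Finset N := (B.erase x).erase y with hE_def
  have hyBx : y ∈ B.erase x := Finset.mem_erase.2 ⟨fun h => hxy h.symm, hyB⟩
  have hxBy : x ∈ B.erase y := Finset.mem_erase.2 ⟨hxy, hxB⟩
  have hEyx : E = (B.erase y).erase x := by rw [hE_def, Finset.erase_right_comm]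
  have hyA0 : insert y E = B.erase x := by rw [hE_def, Finset.insert_erase hyBx]
  have hxA0 : insert x E = B.erase y := by rw [hEyx, Finset.insert_erase hxBy]
  have hxM0 : insert x (insert y E) = B := by rw [hyA0, Finset.insert_erase hxB]
  have hyM0 : insert y (insert x E) = B := by rw [hxA0, Finset.insert_erase hyB]
  have hxM1 : insert x (insert y (insert j E)) = insert j B := by
    rw [Finset.insert_comm y j, Finset.insert_comm x j, hxM0]
  have hyM1 : insert y (insert x (insert j E)) = insert j B := by
    rw [Finset.insert_comm x j, Finset.insert_comm y j, hyM0]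
  have hxA1 : insert x (insert j E) = insert j (B.erase y) := by
    rw [Finset.insert_comm x j, hxA0]
  have hyA1 : insert y (insert j E) = insert j (B.erase x) := by
    rw [Finset.insert_comm y j, hyA0]
  set L : Fin 2 → Finset N := fun ℓ => if ℓ = 0 then E else insert j E with hL_def
  have hxE : x ∉ E := by
    rw [hE_def]
    intro h
    exact Finset.notMem_erase x B (Finset.mem_of_mem_erase h)
  have hyE : y ∉ E := Finset.notMem_erase y (B.erase x)
  have hxL : ∀ ℓ : Fin 2, x ∉ L ℓ := by
    intro ℓ
    rw [hL_def]
    dsimp only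
    split
    · exact hxE
    · intro h
      rcases Finset.mem_insert.1 h with h' | h'
      · exact hxj h'
      · exact hxE h'
  have hyL : ∀ ℓ : Fin 2, y ∉ L ℓ := by
    intro ℓ
    rw [hL_def]
    dsimp only
    split
    · exact hyE
    · intro h
      rcases Finset.mem_insert.1 h with h' | h'
      · exact hyj h'
      · exact hyE h'
  set cnt : Fin 2 → Fin 2 → Fin 2 → ℕ := fun s t ℓ =>
    if s = 0 then
      (if t = 0 then (if ℓ = 0 then 1+mp else 2+mm) else (if ℓ = 0 then 2+mp else 1+mm))
    else
      (if t = 0 then (if ℓ = 0 then 1+mm else mp) else (if ℓ = 0 then mm else 1+mp))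
    with hcnt_def
  obtain ⟨σ, τ, Cx, Cy⟩ := mp_lemma W f hPNE x y hxy L hxL hyL cnt
  have hc0 := Cx 0
  have hc1 := Cx 1
  have hd0 := Cy 0
  have hd1 := Cy 1
  simp only [hcnt_def, hL_def] at hc0 hc1 hd0 hd1
  have hIx : insert x (B.erase x) = B := Finset.insert_erase hxB
  have hIy : insert y (B.erase y) = B := Finset.insert_erase hyB
  have hJx : insert x (insert j (B.erase x)) = insert j B := by
    rw [Finset.insert_comm, hIx]
  have hJy : insert y (insert j (B.erase y)) = insert j B := by
    rw [Finset.insert_comm, hIy]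
  simp only [Fin.sum_univ_two] at hc0 hc1 hd0 hd1
  norm_num [hyA0, hxA0, hyA1, hxA1, hIx, hIy, hJx, hJy, hcx, hcy] at hc0 hc1 hd0 hd1
  fin_cases σ <;> fin_cases τ <;>
    norm_num at hc0 hc1 hd0 hd1 <;>
    nlinarith [hm1, hm2, hexp]


lemma Qab (W : Finset N → ℝ) (f : N → Finset N → ℝ) (hbb : BudgetBalanced W f)
    (hPNE : GuaranteesPNE1 W f) (j : N) :
    ∀ B : Finset N, j ∉ B → (∀ C ⊆ B, W (insert j C) = W C) →
      f j (insert j B) = 0 ∧ ∀ i ∈ B, f i (insert j B) = f i B := by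
  intro B
  induction B using Finset.strongInduction with
  | _ B IH =>
  intro hjB hdum
  have hsum : f j (insert j B) + ∑ p ∈ B, f p (insert j B) = ∑ p ∈ B, f p B := by
    have h1 := hbb (insert j B)
    rw [Finset.sum_insert hjB] at h1
    rw [h1, hdum B (Finset.Subset.refl B), ← hbb B]
  have hA : f j (insert j B) = 0 := by
    by_contra hta
    have hS : ∑ p ∈ B, (f p (insert j B) - f p B) = -(f j (insert j B)) := by
      rw [Finset.sum_sub_distrib]
      linarith [hsum]
    -- pick i with opposite-sign delta and run the small matching-pennies game
    have key : ∀ i ∈ B, (f i (insert j B) - f i B) * f j (insert j B) < 0 → False := by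
      intro i hiB hop
      have hij : i ≠ j := fun h => hjB (h ▸ hiB)
      have hxL : ∀ ℓ : Fin 2, i ∉ (fun _ : Fin 2 => B.erase i) ℓ := fun _ =>
        Finset.notMem_erase i B
      have hyL : ∀ ℓ : Fin 2, j ∉ (fun _ : Fin 2 => B.erase i) ℓ := fun _ h =>
        hjB (Finset.erase_subset i B h)
      obtain ⟨σ, τ, Cx, Cy⟩ := mp_lemma W f hPNE i j hij (fun _ => B.erase i) hxL hyL
        (fun s t ℓ => if s = t then (if ℓ = 0 then 1 else 0) else 0)
      have hEB : insert i (B.erase i) = B := Finset.insert_erase hiB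
      have hE1 : insert i (insert j (B.erase i)) = insert j B := by
        rw [Finset.insert_comm, hEB]
      have hE2 : insert j (insert i (B.erase i)) = insert j B := by rw [hEB]
      have hz : f j (insert j (B.erase i)) = 0 :=
        (IH (B.erase i) (Finset.erase_ssubset hiB) (hyL 0)
          (fun C hC => hdum C (hC.trans (Finset.erase_subset i B)))).1
      have hc0 := Cx 0
      have hc1 := Cx 1
      have hd0 := Cy 0
      have hd1 := Cy 1
      simp only [hE1, hE2, hEB, hz] at hc0 hc1 hd0 hd1
      fin_cases σ <;> fin_cases τ <;>
        norm_num [Fin.sum_univ_two] at hc0 hc1 hd0 hd1 <;>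
        nlinarith [hop]
    rcases lt_or_gt_of_ne hta with hlt | hgt
    · have h0 : ∑ p ∈ B, (0:ℝ) < ∑ p ∈ B, (f p (insert j B) - f p B) := by
        rw [hS, Finset.sum_const_zero]
        linarith
      obtain ⟨i, hiB, hδ⟩ := Finset.exists_lt_of_sum_lt h0
      exact key i hiB (by nlinarith)
    · have h0 : ∑ p ∈ B, (f p (insert j B) - f p B) < ∑ p ∈ B, (0:ℝ) := by
        rw [hS, Finset.sum_const_zero]
        linarith
      obtain ⟨i, hiB, hδ⟩ := Finset.exists_lt_of_sum_lt h0
      exact key i hiB (by nlinarith)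
  refine ⟨hA, ?_⟩
  intro i hiB
  by_contra hne
  have hS0 : ∑ p ∈ B, (f p (insert j B) - f p B) = 0 := by
    rw [Finset.sum_sub_distrib]
    linarith [hsum, hA]
  have hErase := Finset.add_sum_erase B (fun p => f p (insert j B) - f p B) hiB
  have hIH : ∀ k ∈ B, ∀ p ∈ B.erase k, f p (insert j (B.erase k)) = f p (B.erase k) := by
    intro k hkB
    exact (IH (B.erase k) (Finset.erase_ssubset hkB)
      (fun h => hjB (Finset.erase_subset k B h))
      (fun C hC => hdum C (hC.trans (Finset.erase_subset k B)))).2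
  rcases lt_or_gt_of_ne (fun h => hne h) with hlt | hgt
  · -- f i (insert j B) < f i B
    have h0 : ∑ p ∈ B.erase i, (0:ℝ) < ∑ p ∈ B.erase i, (f p (insert j B) - f p B) := by
      rw [Finset.sum_const_zero]
      linarith [hS0, hErase]
    obtain ⟨k, hkE, hδk⟩ := Finset.exists_lt_of_sum_lt h0
    have hkB : k ∈ B := Finset.mem_of_mem_erase hkE
    have hki : k ≠ i := Finset.ne_of_mem_erase hkE
    exact gadget W f hPNE hkB hiB hki hjB
      (hIH i hiB k hkE)
      (hIH k hkB i (Finset.mem_erase.2 ⟨fun h => hki h.symm, hiB⟩))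
      (by linarith) (by linarith)
  · -- f i B < f i (insert j B)
    have h0 : ∑ p ∈ B.erase i, (f p (insert j B) - f p B) < ∑ p ∈ B.erase i, (0:ℝ) := by
      rw [Finset.sum_const_zero]
      linarith [hS0, hErase]
    obtain ⟨k, hkE, hδk⟩ := Finset.exists_lt_of_sum_lt h0
    have hkB : k ∈ B := Finset.mem_of_mem_erase hkE
    have hki : k ≠ i := Finset.ne_of_mem_erase hkE
    exact gadget W f hPNE hiB hkB (fun h => hki h.symm) hjB
      (hIH k hkB i (Finset.mem_erase.2 ⟨fun h => hki h.symm, hiB⟩))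
      (hIH i hiB k hkE)
      (by linarith) (by linarith)




/-- **Proposition (three necessary conditions combined).** A budget-balanced
distribution rule `f` for `W` that guarantees a pure Nash equilibrium in all
games in `G(N, f, W)` satisfies `f(i,S) = f(i, N^W(S))` for all `S ⊆ N`, `i ∈ S`. -/
theorem distributes_as_contributors (N : Type) [Fintype N] [DecidableEq N]
    (hN : 1 < Fintype.card N)
    (W : Finset N → ℝ) (f : N → Finset N → ℝ)
    (hW0 : W ∅ = 0) (hdist : DistRule f) (hbb : BudgetBalanced W f)
    (hPNE : GuaranteesPNE1 W f) :
    ∀ S : Finset N, ∀ i ∈ S, f i S = f i (contributors W S) := by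
  intro S
  induction S using Finset.strongInduction with
  | _ S IH =>
  intro i hiS
  have hCsub : contributors W S ⊆ S :=
    Finset.biUnion_subset.2 (fun T hT => (Finset.mem_filter.1 hT).2)
  by_cases hfull : S ⊆ contributors W S
  · rw [Finset.Subset.antisymm hCsub hfull]
  · obtain ⟨j, hjS, hjC⟩ : ∃ j ∈ S, j ∉ contributors W S := by
      by_contra h
      push_neg at h
      exact hfull h
    have hjE : j ∉ S.erase j := Finset.notMem_erase j S
    have hdum : ∀ C ⊆ S.erase j, W (insert j C) = W C := by
      intro C hC
      have hjnC : j ∉ C := fun h => (Finset.mem_erase.1 (hC h)).1 rfl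
      apply W_insert_eq W hjnC
      intro T hT hjT
      by_contra hcoeff
      have hTS : T ⊆ S := hT.trans (Finset.insert_subset_iff.2
        ⟨hjS, hC.trans (Finset.erase_subset j S)⟩)
      have hTsupp : T ∈ suppIn W S := by
        rw [suppIn, Finset.mem_filter]
        exact ⟨Finset.mem_filter.2 ⟨Finset.mem_univ T, hcoeff⟩, hTS⟩
      exact hjC (Finset.mem_biUnion.2 ⟨T, hTsupp, hjT⟩)
    have hQ := Qab W f hbb hPNE j (S.erase j) hjE hdum
    have hins : insert j (S.erase j) = S := Finset.insert_erase hjS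
    have hCeq : contributors W (S.erase j) = contributors W S := by
      unfold contributors
      congr 1
      apply Finset.ext
      intro T
      simp only [suppIn, Finset.mem_filter]
      constructor
      · rintro ⟨h1, h2⟩
        exact ⟨h1, h2.trans (Finset.erase_subset j S)⟩
      · rintro ⟨h1, h2⟩
        refine ⟨h1, Finset.subset_erase.2 ⟨h2, fun hjT => hjC ?_⟩⟩
        exact Finset.mem_biUnion.2 ⟨T, Finset.mem_filter.2 ⟨h1, h2⟩, hjT⟩
    by_cases hij : i = j
    · subst hij
      have hz : f i S = 0 := by rw [← hins]; exact hQ.1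
      rw [hz]
      exact (hdist i (contributors W S) hjC).symm
    · have hiE : i ∈ S.erase j := Finset.mem_erase.2 ⟨hij, hiS⟩
      calc f i S = f i (insert j (S.erase j)) := by rw [hins]
        _ = f i (S.erase j) := hQ.2 i hiE
        _ = f i (contributors W (S.erase j)) :=
            IH (S.erase j) (Finset.erase_ssubset hjS) i hiE
        _ = f i (contributors W S) := by rw [hCeq]

end CostSharing
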